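/- Let 0 < φ_1 ≤ ... ≤ φ_m < π and 0 < φ̂_1 ≤ ... ≤ φ̂_m < π, and suppose ĝ ∈ SO(m) ⊂ U(m) satisfies ĝ(ℝ^m_φ) = ℝ^m_{φ̂}, where ℝ^m_φ = {(t_1 e^{iφ_1}, ..., t_m e^{iφ_m}) : t_i ∈ ℝ} ⊂ ℂ^m. Then φ_j = φ̂_j for all j = 1, ..., m. -/

import Mathlib

/-- The Lagrangian subspace `ℝ^m_φ = {(t₁ e^{iφ₁}, ..., t_m e^{iφ_m}) : tᵢ ∈ ℝ} ⊂ ℂ^m`. -/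
def Rphi (m : ℕ) (φ : Fin m → ℝ) : Set (Fin m → ℂ) :=
  {x | ∀ i, ∃ t : ℝ, x i = (t : ℂ) * Complex.exp (Complex.I * φ i)}

/-- If `g` is injective (as mulVec) and vanishes on `S × Tᶜ` then `#S ≤ #T`. -/
lemma card_le_of_block {m : ℕ} (g : Matrix (Fin m) (Fin m) ℝ)
    (hinj : Function.Injective g.mulVec) (S T : Finset (Fin m))
    (h : ∀ j k, k ∈ S → j ∉ T → g j k = 0) : S.card ≤ T.card := by
  classical
  let F : (S → ℝ) →ₗ[ℝ] (T → ℝ) :=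
    (LinearMap.funLeft ℝ ℝ (Subtype.val : T → Fin m)) ∘ₗ g.mulVecLin ∘ₗ
      (Function.ExtendByZero.linearMap ℝ (Subtype.val : S → Fin m))
  have hFinj : Function.Injective F := by
    rw [← LinearMap.ker_eq_bot, LinearMap.ker_eq_bot']
    intro c hc
    set x : Fin m → ℝ := Function.extend (Subtype.val : S → Fin m) c 0 with hx
    have hxS : ∀ (k : Fin m) (hk : k ∈ S), x k = c ⟨k, hk⟩ := by
      intro k hk
      have := Subtype.val_injective.extend_apply c (0 : Fin m → ℝ) (⟨k, hk⟩ : S)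
      simpa [hx] using this
    have hxn : ∀ k : Fin m, k ∉ S → x k = 0 := by
      intro k hk
      rw [hx, Function.extend_apply']
      · rfl
      · rintro ⟨a, rfl⟩; exact hk a.2
    have hmul : g.mulVec x = 0 := by
      funext j
      by_cases hj : j ∈ T
      · have := congrFun hc ⟨j, hj⟩
        simp [F, Function.ExtendByZero.linearMap, hx] at this
        exact this
      · show (Finset.univ.sum fun k => g j k * x k) = 0
        refine Finset.sum_eq_zero fun k _ => ?_
        by_cases hk : k ∈ S
        · rw [h j k hk hj, zero_mul]
        · rw [hxn k hk, mul_zero]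
    have hx0 : x = 0 := hinj (by simpa using hmul)
    funext k
    have := congrFun hx0 (k : Fin m)
    rw [hxS k.1 k.2] at this
    simpa using this
  have := LinearMap.finrank_le_finrank_of_injective hFinj
  simpa [Module.finrank_fintype_fun_eq_card, Fintype.card_coe] using this

/-- Monotone functions with the same cumulative counts are equal: one inequality. -/
lemma mono_le_of_counts {m : ℕ} (f h : Fin m → ℝ) (hf : Monotone f) (hh : Monotone h)
    (hc : ∀ v : ℝ, (Finset.univ.filter fun k => h k ≤ v).card ≤
        (Finset.univ.filter fun k => f k ≤ v).card) :
    ∀ i, f i ≤ h i := by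
  classical
  intro i
  by_contra hlt
  push_neg at hlt
  have h1 : (Finset.Iic i) ⊆ Finset.univ.filter fun k => h k ≤ h i := by
    intro k hk
    simp only [Finset.mem_filter, Finset.mem_univ, true_and]
    exact hh (Finset.mem_Iic.mp hk)
  have h2 : (Finset.univ.filter fun k => f k ≤ h i) ⊆ Finset.Iio i := by
    intro k hk
    simp only [Finset.mem_filter, Finset.mem_univ, true_and] at hk
    rw [Finset.mem_Iio]
    by_contra hik
    push_neg at hik
    exact absurd (le_trans (hf hik) hk) (not_le.mpr hlt)
  have := (Finset.card_le_card h1).trans ((hc (h i)).trans (Finset.card_le_card h2))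
  rw [Fin.card_Iic, Fin.card_Iio] at this
  omega

theorem stmt7 (m : ℕ) (φ φh : Fin m → ℝ) (g : Matrix (Fin m) (Fin m) ℝ)
    (hφmono : Monotone φ) (hφ : ∀ i, φ i ∈ Set.Ioo 0 Real.pi)
    (hφhmono : Monotone φh) (hφh : ∀ i, φh i ∈ Set.Ioo 0 Real.pi)
    (hg : g ∈ Matrix.specialOrthogonalGroup (Fin m) ℝ)
    (him : (g.map Complex.ofReal).mulVec '' Rphi m φ = Rphi m φh) :
    φ = φh := by
  classical
  -- orthogonality
  have horth : g ∈ Matrix.orthogonalGroup (Fin m) ℝ :=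
    (Matrix.mem_specialOrthogonalGroup_iff.mp hg).1
  have h1 : g * g.transpose = 1 := by
    have := horth.2
    rwa [Matrix.star_eq_conjTranspose, Matrix.conjTranspose_eq_transpose_of_trivial] at this
  have h2 : g.transpose * g = 1 := by
    have := horth.1
    rwa [Matrix.star_eq_conjTranspose, Matrix.conjTranspose_eq_transpose_of_trivial] at this
  have hinj : Function.Injective g.mulVec := by
    intro x y hxy
    have : g.transpose.mulVec (g.mulVec x) = g.transpose.mulVec (g.mulVec y) := by rw [hxy]
    rwa [Matrix.mulVec_mulVec, Matrix.mulVec_mulVec, h2, Matrix.one_mulVec,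
      Matrix.one_mulVec] at this
  have hinjT : Function.Injective g.transpose.mulVec := by
    intro x y hxy
    have : g.mulVec (g.transpose.mulVec x) = g.mulVec (g.transpose.mulVec y) := by rw [hxy]
    rwa [Matrix.mulVec_mulVec, Matrix.mulVec_mulVec, h1, Matrix.one_mulVec,
      Matrix.one_mulVec] at this
  -- key relation
  have hrel : ∀ j k, g j k ≠ 0 → φ k = φh j := by
    intro j k hjk
    set x : Fin m → ℂ := fun i => if i = k then Complex.exp (Complex.I * φ k) else 0 with hxdef
    have hx : x ∈ Rphi m φ := by
      intro i
      by_cases h : i = k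
      · subst h; exact ⟨1, by simp [hxdef]⟩
      · exact ⟨0, by simp [hxdef, h]⟩
    have hmem : (g.map Complex.ofReal).mulVec x ∈ Rphi m φh :=
      him ▸ Set.mem_image_of_mem _ hx
    obtain ⟨t, ht⟩ := hmem j
    have hval : (g.map Complex.ofReal).mulVec x j
        = (g j k : ℂ) * Complex.exp (Complex.I * φ k) := by
      show (Finset.univ.sum fun i => (g.map Complex.ofReal) j i * x i) = _
      rw [Finset.sum_eq_single k]
      · simp [hxdef, Matrix.map_apply]
      · intro i _ hi; simp [hxdef, hi]
      · intro hk; exact absurd (Finset.mem_univ k) hk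
    rw [hval] at ht
    rw [mul_comm Complex.I (φ k : ℂ), mul_comm Complex.I (φh j : ℂ),
      Complex.exp_mul_I, Complex.exp_mul_I] at ht
    have hre := congrArg Complex.re ht
    have him' := congrArg Complex.im ht
    simp [Complex.mul_re, Complex.mul_im, Complex.cos_ofReal_re, Complex.sin_ofReal_re] at hre him'
    have hsin : g j k * Real.sin (φ k - φh j) = 0 := by
      rw [Real.sin_sub]
      linear_combination Real.cos (φh j) * him' - Real.sin (φh j) * hre
    have hs0 : Real.sin (φ k - φh j) = 0 := by
      rcases mul_eq_zero.mp hsin with h | h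
      · exact absurd h hjk
      · exact h
    have hb1 := hφ k
    have hb2 := hφh j
    simp only [Set.mem_Ioo] at hb1 hb2
    have : φ k - φh j = 0 := by
      rwa [Real.sin_eq_zero_iff_of_lt_of_lt (by linarith) (by linarith)] at hs0
    linarith
  -- counting
  have hcount : ∀ v : ℝ, (Finset.univ.filter fun k => φ k ≤ v).card =
      (Finset.univ.filter fun j => φh j ≤ v).card := by
    intro v
    refine le_antisymm ?_ ?_
    · refine card_le_of_block g hinj _ _ fun j k hk hj => ?_
      simp only [Finset.mem_filter, Finset.mem_univ, true_and] at hk hj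
      by_contra hne
      exact hj ((hrel j k hne) ▸ hk)
    · refine card_le_of_block g.transpose hinjT _ _ fun k j hj hk => ?_
      simp only [Finset.mem_filter, Finset.mem_univ, true_and] at hj hk
      show g j k = 0
      by_contra hne
      exact hk ((hrel j k hne) ▸ hj)
  funext i
  refine le_antisymm ?_ ?_
  · exact mono_le_of_counts φ φh hφmono hφhmono (fun v => (hcount v).ge) i
  · exact mono_le_of_counts φh φ hφhmono hφmono (fun v => (hcount v).le) i
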